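/- Let n ≥ 1 be an integer and let q be a real number with q > 0 and q ≠ 1. Set z₋ := 1/(1+√q)² and z₊ := 1/(1−√q)². Then (|q−1|/(2π)) · ∫_{z₋}^{z₊} z^{−n−2} · √((z − z₋)(z₊ − z)) dz = ∑_{j=1}^{n} (1/n)·C(n,j)·C(n,j−1)·q^j, where C(n,r) denotes the binomial coefficient. -/

import Mathlib

open Finset

/-- coefficient of `q^j` in the Narayana polynomial, with the convention
that it is `0` at `j = 0` (via the `j/j` trick). -/
noncomputable def narC (n j : ℕ) : ℝ :=
  (n.choose j : ℝ) * (n.choose (j-1) : ℝ) * j / (n * j)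

lemma narC_zero (n : ℕ) : narC n 0 = 0 := by simp [narC]

lemma narC_eq (n j : ℕ) (hj : 1 ≤ j) (hn : 1 ≤ n) :
    narC n j = (n.choose j : ℝ) * (n.choose (j-1) : ℝ) / n := by
  have hj' : (j:ℝ) ≠ 0 := Nat.cast_ne_zero.2 (by omega)
  have hn' : (n:ℝ) ≠ 0 := Nat.cast_ne_zero.2 (by omega)
  rw [narC, mul_comm (n:ℝ) (j:ℝ), ← div_div, mul_div_assoc, div_self hj', mul_one]

lemma narC_big (n j : ℕ) (h : n < j) : narC n j = 0 := by
  simp [narC, Nat.choose_eq_zero_of_lt h]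

lemma cast_descFactorial_succ (n k : ℕ) :
    ((n.descFactorial (k+1) : ℕ) : ℝ) = ((n:ℝ) - k) * (n.descFactorial k : ℝ) := by
  rcases lt_or_ge n (k+1) with h | h
  · rcases Nat.lt_or_ge n k with h2 | h2
    · simp [Nat.descFactorial_eq_zero_iff_lt.2 h, Nat.descFactorial_eq_zero_iff_lt.2 h2]
    · have : n = k := by omega
      subst this
      simp [Nat.descFactorial_eq_zero_iff_lt.2 h]
  · have hk : k ≤ n := by omega
    rw [Nat.descFactorial_succ, Nat.cast_mul, Nat.cast_sub hk]

lemma cast_choose_desc (n k : ℕ) :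
    (n.choose k : ℝ) = (n.descFactorial k : ℝ) / (k.factorial : ℝ) := by
  rw [eq_div_iff (by exact_mod_cast k.factorial_ne_zero)]
  have := Nat.descFactorial_eq_factorial_mul_choose n k
  exact_mod_cast (mul_comm (k.factorial) (n.choose k) ▸ this.symm)

/-- relation between `D(m+1,i)` and `D(m,i)`. -/
lemma desc_top_rel (m i : ℕ) :
    ((m:ℝ) + 1 - i) * ((m+1).descFactorial i : ℝ) = ((m:ℝ)+1) * (m.descFactorial i : ℝ) := by
  have h1 := cast_descFactorial_succ (m+1) i
  have h2 : ((m+1).descFactorial (i+1) : ℕ) = (m+1) * m.descFactorial i :=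
    Nat.succ_descFactorial_succ m i
  rw [h2] at h1
  push_cast at h1 ⊢
  linarith [h1]

lemma cast_desc_succ_top (a b : ℕ) :
    (((a+1).descFactorial (b+1) : ℕ) : ℝ) = ((a:ℝ)+1) * (a.descFactorial b : ℝ) := by
  rw [Nat.succ_descFactorial_succ]; push_cast; ring

set_option maxHeartbeats 2000000 in
lemma narC_rec (m i : ℕ) :
    ((m:ℝ)+4) * narC (m+3) (i+3)
      = (2*(m:ℝ)+5) * (narC (m+2) (i+3) + narC (m+2) (i+2))
        - ((m:ℝ)+1) * (narC (m+1) (i+3) - 2 * narC (m+1) (i+2) + narC (m+1) (i+1)) := by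
  rw [narC_eq (m+3) (i+3) (by omega) (by omega), narC_eq (m+2) (i+3) (by omega) (by omega),
      narC_eq (m+2) (i+2) (by omega) (by omega), narC_eq (m+1) (i+3) (by omega) (by omega),
      narC_eq (m+1) (i+2) (by omega) (by omega), narC_eq (m+1) (i+1) (by omega) (by omega)]
  rw [show i+3-1 = i+2 from rfl, show i+2-1 = i+1 from rfl, show i+1-1 = i from rfl]
  simp only [cast_choose_desc]
  -- reduce all descFactorials to Y := ((m+1).descFactorial i : ℝ)
  have h33 : (((m+3).descFactorial (i+3) : ℕ) : ℝ)
      = ((m:ℝ)+3) * (((m+2).descFactorial (i+2) : ℕ) : ℝ) := by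
    have := cast_desc_succ_top (m+2) (i+2); push_cast at this ⊢; linarith
  have h32 : (((m+3).descFactorial (i+2) : ℕ) : ℝ)
      = ((m:ℝ)+3) * (((m+2).descFactorial (i+1) : ℕ) : ℝ) := by
    have := cast_desc_succ_top (m+2) (i+1); push_cast at this ⊢; linarith
  have h23 : (((m+2).descFactorial (i+3) : ℕ) : ℝ)
      = ((m:ℝ)+2) * (((m+1).descFactorial (i+2) : ℕ) : ℝ) := by
    have := cast_desc_succ_top (m+1) (i+2); push_cast at this ⊢; linarith
  have h22 : (((m+2).descFactorial (i+2) : ℕ) : ℝ)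
      = ((m:ℝ)+2) * (((m+1).descFactorial (i+1) : ℕ) : ℝ) := by
    have := cast_desc_succ_top (m+1) (i+1); push_cast at this ⊢; linarith
  have h21 : (((m+2).descFactorial (i+1) : ℕ) : ℝ)
      = ((m:ℝ)+2) * (((m+1).descFactorial i : ℕ) : ℝ) := by
    have := cast_desc_succ_top (m+1) i; push_cast at this ⊢; linarith
  have h13 : (((m+1).descFactorial (i+3) : ℕ) : ℝ)
      = ((m:ℝ)+1) * ((m.descFactorial (i+2) : ℕ) : ℝ) := by
    have := cast_desc_succ_top m (i+2); push_cast at this ⊢; linarith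
  have h12 : (((m+1).descFactorial (i+2) : ℕ) : ℝ)
      = ((m:ℝ)+1) * ((m.descFactorial (i+1) : ℕ) : ℝ) := by
    have := cast_desc_succ_top m (i+1); push_cast at this ⊢; linarith
  have h11 : (((m+1).descFactorial (i+1) : ℕ) : ℝ)
      = ((m:ℝ)+1) * ((m.descFactorial i : ℕ) : ℝ) := by
    have := cast_desc_succ_top m i; push_cast at this ⊢; linarith
  have hm2 : ((m.descFactorial (i+2) : ℕ) : ℝ)
      = ((m:ℝ)-((i:ℝ)+1)) * ((m.descFactorial (i+1) : ℕ) : ℝ) := by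
    have := cast_descFactorial_succ m (i+1); push_cast at this ⊢; linarith
  have hm1 : ((m.descFactorial (i+1) : ℕ) : ℝ)
      = ((m:ℝ)-(i:ℝ)) * ((m.descFactorial i : ℕ) : ℝ) := by
    have := cast_descFactorial_succ m i; push_cast at this ⊢; linarith
  have hm0 : ((m.descFactorial i : ℕ) : ℝ)
      = ((m:ℝ)+1-(i:ℝ)) * (((m+1).descFactorial i : ℕ) : ℝ) / ((m:ℝ)+1) := by
    rw [eq_div_iff (by positivity)]
    have := desc_top_rel m i; push_cast at this ⊢; linarith
  rw [h33, h32, h23, h22, h21, h13, h12, h11, hm2, hm1, hm0]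
  -- factorials
  have hf3 : (((i+3).factorial : ℕ) : ℝ) = ((i:ℝ)+3) * ((i+2).factorial : ℝ) := by
    rw [show i+3 = (i+2)+1 from rfl, Nat.factorial_succ]; push_cast; ring
  have hf2 : (((i+2).factorial : ℕ) : ℝ) = ((i:ℝ)+2) * ((i+1).factorial : ℝ) := by
    rw [show i+2 = (i+1)+1 from rfl, Nat.factorial_succ]; push_cast; ring
  have hf1 : (((i+1).factorial : ℕ) : ℝ) = ((i:ℝ)+1) * (i.factorial : ℝ) := by
    rw [Nat.factorial_succ]; push_cast; ring
  rw [hf3, hf2, hf1]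
  have hfne : (i.factorial : ℝ) ≠ 0 := Nat.cast_ne_zero.2 i.factorial_ne_zero
  have h1 : ((i:ℝ)+1) ≠ 0 := by positivity
  have h2 : ((i:ℝ)+2) ≠ 0 := by positivity
  have h3 : ((i:ℝ)+3) ≠ 0 := by positivity
  have g1 : ((m:ℝ)+1) ≠ 0 := by positivity
  have g2 : ((m:ℝ)+2) ≠ 0 := by positivity
  have g3 : ((m:ℝ)+3) ≠ 0 := by positivity
  push_cast
  field_simp
  ring

lemma narC_one (n : ℕ) (hn : 1 ≤ n) : narC n 1 = 1 := by
  rw [narC_eq n 1 le_rfl hn]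
  simp [Nat.choose_one_right]
  omega

lemma narC_two (n : ℕ) : narC (n+1) 2 = ((n:ℝ)+1)*(n:ℝ)/2 := by
  rw [narC_eq (n+1) 2 (by omega) (by omega)]
  rw [show (2:ℕ)-1 = 1 from rfl, Nat.choose_one_right]
  have hd : ((((n+1)).descFactorial 2 : ℕ) : ℝ) = ((n:ℝ)+1)*(n:ℝ) := by
    rw [show (2:ℕ) = 1+1 from rfl, Nat.succ_descFactorial_succ, Nat.descFactorial_one]
    push_cast; ring
  rw [cast_choose_desc, hd]
  have h1 : ((n:ℝ)+1) ≠ 0 := by positivity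
  rw [show ((Nat.factorial 2 : ℕ) : ℝ) = 2 from by norm_num [Nat.factorial]]
  push_cast
  field_simp

lemma narC_rec_all (m j : ℕ) :
    ((m:ℝ)+4) * narC (m+3) j
      = (2*(m:ℝ)+5) * (narC (m+2) j + narC (m+2) (j-1))
        - ((m:ℝ)+1) * (narC (m+1) j - 2 * narC (m+1) (j-1) + narC (m+1) (j-2)) := by
  match j with
  | 0 => simp [narC_zero]
  | 1 =>
    simp only [show (1:ℕ)-1 = 0 from rfl, show (1:ℕ)-2 = 0 from rfl, narC_zero,
      narC_one (m+3) (by omega), narC_one (m+2) (by omega), narC_one (m+1) (by omega)]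
    ring
  | 2 =>
    simp only [show (2:ℕ)-1 = 1 from rfl, show (2:ℕ)-2 = 0 from rfl, narC_zero,
      narC_one (m+3) (by omega), narC_one (m+2) (by omega), narC_one (m+1) (by omega),
      show m+3 = (m+2)+1 from rfl, show m+2 = (m+1)+1 from rfl, show m+1 = m+1 from rfl]
    rw [narC_two (m+2), narC_two (m+1), narC_two m]
    push_cast; ring
  | (i+3) =>
    rw [show i+3-1 = i+2 from rfl, show i+3-2 = i+1 from rfl]
    exact narC_rec m i

noncomputable def narS (q : ℝ) (n K : ℕ) : ℝ := ∑ j ∈ Finset.range K, narC n j * q ^ j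

noncomputable def Nar (q : ℝ) (n : ℕ) : ℝ := narS q n (n+1)

lemma narS_eq_Nar (q : ℝ) (n K : ℕ) (h : n+1 ≤ K) : narS q n K = Nar q n := by
  induction K, h using Nat.le_induction with
  | base => rfl
  | succ K hK ih =>
    rw [← ih, narS, Finset.sum_range_succ, narC_big n K (by omega)]
    simp [narS]

lemma shift1 (q : ℝ) (n L : ℕ) (h : n+1 ≤ L) :
    ∑ j ∈ Finset.range (L+1), narC n (j-1) * q^j = q * Nar q n := by
  rw [Finset.sum_range_succ']
  simp only [Nat.add_sub_cancel, Nat.zero_sub, narC_zero, zero_mul, add_zero, pow_zero]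
  rw [← narS_eq_Nar q n L h, narS, Finset.mul_sum]
  exact Finset.sum_congr rfl (fun j _ => by ring)

lemma shift2 (q : ℝ) (n L : ℕ) (h : n+1 ≤ L) :
    ∑ j ∈ Finset.range (L+2), narC n (j-2) * q^j = q^2 * Nar q n := by
  rw [Finset.sum_range_succ']
  simp only [Nat.zero_sub, narC_zero, zero_mul, add_zero, pow_zero]
  have e : ∀ j : ℕ, j + 1 - 2 = j - 1 := fun j => by omega
  have : ∑ j ∈ Finset.range (L+1), narC n (j+1-2) * q^(j+1)
      = q * ∑ j ∈ Finset.range (L+1), narC n (j-1) * q^j := by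
    rw [Finset.mul_sum]
    exact Finset.sum_congr rfl (fun j _ => by rw [e j]; ring)
  rw [this, shift1 q n L h]
  ring

lemma Nar_rec (q : ℝ) (m : ℕ) :
    ((m:ℝ)+4) * Nar q (m+3)
      = (2*(m:ℝ)+5) * (1+q) * Nar q (m+2) - ((m:ℝ)+1) * (1-q)^2 * Nar q (m+1) := by
  have hA : Nar q (m+3) = narS q (m+3) (m+6+2) := (narS_eq_Nar q (m+3) (m+8) (by omega)).symm
  have hB : Nar q (m+2) = narS q (m+2) (m+6+2) := (narS_eq_Nar q (m+2) (m+8) (by omega)).symm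
  have hC : Nar q (m+1) = narS q (m+1) (m+6+2) := (narS_eq_Nar q (m+1) (m+8) (by omega)).symm
  have hS2B : ∑ j ∈ Finset.range (m+7+1), narC (m+2) (j-1) * q^j = q * Nar q (m+2) :=
    shift1 q (m+2) (m+7) (by omega)
  have hS2B' : ∑ j ∈ Finset.range (m+8), narC (m+2) (j-1) * q^j = q * Nar q (m+2) := hS2B
  have hS4 : ∑ j ∈ Finset.range (m+7+1), narC (m+1) (j-1) * q^j = q * Nar q (m+1) :=
    shift1 q (m+1) (m+7) (by omega)
  have hS5 : ∑ j ∈ Finset.range (m+6+2), narC (m+1) (j-2) * q^j = q^2 * Nar q (m+1) :=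
    shift2 q (m+1) (m+6) (by omega)
  rw [hA, hB, hC] at *
  rw [narS, narS, narS] at *
  rw [Finset.mul_sum]
  have key : ∑ j ∈ Finset.range (m+6+2), ((m:ℝ)+4) * (narC (m+3) j * q ^ j)
      = ∑ j ∈ Finset.range (m+6+2),
          ((2*(m:ℝ)+5) * (narC (m+2) j * q^j + narC (m+2) (j-1) * q^j)
            - ((m:ℝ)+1) * (narC (m+1) j * q^j - 2 * (narC (m+1) (j-1) * q^j)
                + narC (m+1) (j-2) * q^j)) := by
    refine Finset.sum_congr rfl (fun j _ => ?_)
    linear_combination q^j * (narC_rec_all m j)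
  rw [key, Finset.sum_sub_distrib]
  simp only [Finset.sum_add_distrib, Finset.sum_sub_distrib, ← Finset.mul_sum]
  rw [hS2B', hS4, hS5]
  ring

lemma Nar_one (q : ℝ) : Nar q 1 = q := by
  have h1 : narC 1 1 = 1 := narC_one 1 le_rfl
  simp [Nar, narS, Finset.sum_range_succ, narC_zero, h1]

lemma Nar_two (q : ℝ) : Nar q 2 = q + q^2 := by
  have h1 : narC 2 1 = 1 := narC_one 2 (by omega)
  have h2 : narC 2 2 = 1 := by
    rw [narC_eq 2 2 (by omega) (by omega)]
    norm_num [Nat.choose]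
  simp [Nar, narS, Finset.sum_range_succ, narC_zero, h1, h2]

lemma Nar_eq_rhs (q : ℝ) (n : ℕ) (hn : 1 ≤ n) :
    Nar q n = ∑ j ∈ Finset.Icc 1 n,
      (1 / (n : ℝ)) * (Nat.choose n j : ℝ) * (Nat.choose n (j - 1) : ℝ) * q ^ j := by
  have hsub : Finset.Icc 1 n ⊆ Finset.range (n+1) := by
    intro x hx
    simp only [Finset.mem_Icc] at hx
    simp only [Finset.mem_range]
    omega
  have hzero : ∀ x ∈ Finset.range (n+1), x ∉ Finset.Icc 1 n → narC n x * q^x = 0 := by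
    intro x hx hnx
    simp only [Finset.mem_range] at hx
    simp only [Finset.mem_Icc] at hnx
    have : x = 0 := by omega
    subst this
    simp [narC_zero]
  rw [Nar, narS, ← Finset.sum_subset hsub hzero]
  refine Finset.sum_congr rfl (fun j hj => ?_)
  simp only [Finset.mem_Icc] at hj
  rw [narC_eq n j hj.1 hn]
  ring

open intervalIntegral Real Set

lemma sqrtP_cont (a b : ℝ) : Continuous (fun w : ℝ => Real.sqrt ((w-a)*(b-w))) :=
  Real.continuous_sqrt.comp (by continuity)

lemma J0_lemma (a b : ℝ) (hab : a ≤ b) :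
    ∫ w in a..b, Real.sqrt ((w-a)*(b-w)) = Real.pi * (b-a)^2 / 8 := by
  set r := (b-a)/2 with hr
  set c := (a+b)/2 with hc
  have hr0 : 0 ≤ r := by simp [hr]; linarith
  have hderiv : ∀ x ∈ uIcc (-1:ℝ) 1, HasDerivAt (fun x : ℝ => c + r*x) r x := by
    intro x _
    simpa using ((hasDerivAt_id x).const_mul r).const_add c
  have h' : ContinuousOn (fun _ : ℝ => r) (uIcc (-1:ℝ) 1) := continuousOn_const
  have hg : Continuous (fun w : ℝ => Real.sqrt ((w-a)*(b-w))) := sqrtP_cont a b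
  have key := intervalIntegral.integral_comp_smul_deriv hderiv h' hg
  have e1 : c + r * (-1) = a := by rw [hr, hc]; ring
  have e2 : c + r * 1 = b := by rw [hr, hc]; ring
  rw [e1, e2] at key
  rw [← key]
  have ptwise : ∀ x : ℝ, r • Real.sqrt ((c + r*x - a) * (b - (c + r*x)))
      = r^2 * Real.sqrt (1 - x^2) := by
    intro x
    have e3 : (c + r*x - a) * (b - (c + r*x)) = r^2 * (1 - x^2) := by
      rw [hr, hc]; ring
    rw [smul_eq_mul, e3, Real.sqrt_mul (sq_nonneg r), Real.sqrt_sq hr0]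
    ring
  calc ∫ x in (-1:ℝ)..1, r • (fun w => Real.sqrt ((w-a)*(b-w))) (c + r*x)
      = ∫ x in (-1:ℝ)..1, r^2 * Real.sqrt (1 - x^2) := by
        apply intervalIntegral.integral_congr
        intro x _
        exact ptwise x
    _ = r^2 * ∫ x in (-1:ℝ)..1, Real.sqrt (1 - x^2) := intervalIntegral.integral_const_mul _ _
    _ = Real.pi * (b-a)^2 / 8 := by
        rw [integral_sqrt_one_sub_sq, hr]; ring

lemma hasDerivAt_PsqrtP (a b x : ℝ) (hax : a < x) (hxb : x < b) :
    HasDerivAt (fun w : ℝ => ((w-a)*(b-w)) * Real.sqrt ((w-a)*(b-w)))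
      ((3/2) * (a + b - 2*x) * Real.sqrt ((x-a)*(b-x))) x := by
  have hP : HasDerivAt (fun w : ℝ => (w-a)*(b-w)) (a + b - 2*x) x := by
    have h1 : HasDerivAt (fun w : ℝ => w - a) 1 x := (hasDerivAt_id x).sub_const a
    have h2 : HasDerivAt (fun w : ℝ => b - w) (-1) x := by
      simpa using (hasDerivAt_id x).const_sub b
    have := h1.fun_mul h2
    refine this.congr_deriv ?_
    ring
  have hpos : 0 < (x-a)*(b-x) := mul_pos (by linarith) (by linarith)
  have hsq : HasDerivAt (fun w : ℝ => Real.sqrt ((w-a)*(b-w)))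
      (1 / (2 * Real.sqrt ((x-a)*(b-x))) * (a + b - 2*x)) x :=
    (Real.hasDerivAt_sqrt hpos.ne').comp x hP
  have := hP.fun_mul hsq
  refine this.congr_deriv ?_
  have hs0 : Real.sqrt ((x-a)*(b-x)) ≠ 0 := by positivity
  have hss : Real.sqrt ((x-a)*(b-x)) * Real.sqrt ((x-a)*(b-x)) = (x-a)*(b-x) :=
    Real.mul_self_sqrt hpos.le
  field_simp
  nlinarith [hss]

lemma ftc_core (a b : ℝ) (hab : a ≤ b) (p : ℕ) :
    ∫ w in a..b, (((p:ℝ) * w^(p-1) * ((w-a)*(b-w)) + (3/2) * w^p * (a + b - 2*w))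
        * Real.sqrt ((w-a)*(b-w))) = 0 := by
  set g : ℝ → ℝ := fun w => w^p * (((w-a)*(b-w)) * Real.sqrt ((w-a)*(b-w))) with hg
  set g' : ℝ → ℝ := fun w => ((p:ℝ) * w^(p-1) * ((w-a)*(b-w)) + (3/2) * w^p * (a + b - 2*w))
      * Real.sqrt ((w-a)*(b-w)) with hg'
  have hcont : ContinuousOn g (Icc a b) := by
    apply Continuous.continuousOn
    exact (continuous_pow p).mul ((by continuity : Continuous fun w : ℝ => (w-a)*(b-w)).mul
      (sqrtP_cont a b))
  have hderiv : ∀ x ∈ Ioo a b, HasDerivWithinAt g (g' x) (Ioi x) x := by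
    intro x hx
    have h1 : HasDerivAt (fun w : ℝ => w^p) ((p:ℝ) * x^(p-1)) x := hasDerivAt_pow p x
    have h2 := hasDerivAt_PsqrtP a b x hx.1 hx.2
    have := h1.mul h2
    have heq : (p:ℝ) * x^(p-1) * (((x-a)*(b-x)) * Real.sqrt ((x-a)*(b-x)))
        + x^p * ((3/2) * (a + b - 2*x) * Real.sqrt ((x-a)*(b-x))) = g' x := by
      rw [hg']; ring
    rw [heq] at this
    exact this.hasDerivWithinAt
  have hint : IntervalIntegrable g' MeasureTheory.volume a b := by
    apply Continuous.intervalIntegrable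
    exact ((by continuity : Continuous fun w : ℝ =>
      (p:ℝ) * w^(p-1) * ((w-a)*(b-w)) + (3/2) * w^p * (a + b - 2*w)).mul (sqrtP_cont a b))
  have := intervalIntegral.integral_eq_sub_of_hasDeriv_right_of_le hab hcont hderiv hint
  rw [this, hg]
  simp

lemma Jint (a b : ℝ) (k : ℕ) :
    IntervalIntegrable (fun w : ℝ => w^k * Real.sqrt ((w-a)*(b-w)))
      MeasureTheory.volume a b :=
  ((continuous_pow k).mul (sqrtP_cont a b)).intervalIntegrable a b

lemma J_rec (a b : ℝ) (hab : a ≤ b) (k : ℕ) :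
    ((k:ℝ)+4) * ∫ w in a..b, w^(k+2) * Real.sqrt ((w-a)*(b-w))
      = (a+b) * ((k:ℝ)+5/2) * (∫ w in a..b, w^(k+1) * Real.sqrt ((w-a)*(b-w)))
        - a*b*((k:ℝ)+1) * ∫ w in a..b, w^k * Real.sqrt ((w-a)*(b-w)) := by
  have h0 := ftc_core a b hab (k+1)
  have expand : ∀ w : ℝ, (((k+1:ℕ):ℝ) * w^(k+1-1) * ((w-a)*(b-w))
        + (3/2) * w^(k+1) * (a + b - 2*w)) * Real.sqrt ((w-a)*(b-w))
      = (a+b) * ((k:ℝ)+5/2) * (w^(k+1) * Real.sqrt ((w-a)*(b-w)))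
        - a*b*((k:ℝ)+1) * (w^k * Real.sqrt ((w-a)*(b-w)))
        - ((k:ℝ)+4) * (w^(k+2) * Real.sqrt ((w-a)*(b-w))) := by
    intro w
    rw [show k+1-1 = k from rfl]
    push_cast
    ring
  rw [intervalIntegral.integral_congr (fun w _ => expand w)] at h0
  rw [intervalIntegral.integral_sub (((Jint a b (k+1)).const_mul _).sub
        ((Jint a b k).const_mul _)) ((Jint a b (k+2)).const_mul _),
      intervalIntegral.integral_sub ((Jint a b (k+1)).const_mul _)
        ((Jint a b k).const_mul _),
      intervalIntegral.integral_const_mul, intervalIntegral.integral_const_mul,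
      intervalIntegral.integral_const_mul] at h0
  linarith

lemma J_one (a b : ℝ) (hab : a ≤ b) :
    2 * ∫ w in a..b, w^1 * Real.sqrt ((w-a)*(b-w))
      = (a+b) * ∫ w in a..b, w^0 * Real.sqrt ((w-a)*(b-w)) := by
  have h0 := ftc_core a b hab 0
  have expand : ∀ w : ℝ, (((0:ℕ):ℝ) * w^(0-1) * ((w-a)*(b-w))
        + (3/2) * w^0 * (a + b - 2*w)) * Real.sqrt ((w-a)*(b-w))
      = (3/2) * ((a+b) * (w^0 * Real.sqrt ((w-a)*(b-w)))
          - 2 * (w^1 * Real.sqrt ((w-a)*(b-w)))) := by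
    intro w
    push_cast
    ring
  rw [intervalIntegral.integral_congr (fun w _ => expand w),
      intervalIntegral.integral_const_mul,
      intervalIntegral.integral_sub ((Jint a b 0).const_mul _)
        ((Jint a b 1).const_mul _),
      intervalIntegral.integral_const_mul, intervalIntegral.integral_const_mul] at h0
  have := mul_eq_zero.1 h0
  rcases this with h | h
  · norm_num at h
  · linarith

lemma subst_lemma (a b : ℝ) (ha : 0 < a) (hab : a < b) (m : ℕ) :
    ∫ z in (1/b)..(1/a), z ^ (-(m:ℤ)-3) * Real.sqrt ((z - 1/b) * (1/a - z))
      = (Real.sqrt (a*b))⁻¹ * ∫ w in a..b, w^m * Real.sqrt ((w-a)*(b-w)) := by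
  have hb : 0 < b := lt_trans ha hab
  have huIcc : uIcc b a = Icc a b := by rw [Set.uIcc_comm, Set.uIcc_of_le hab.le]
  set g : ℝ → ℝ := fun z => z ^ (-(m:ℤ)-3) * Real.sqrt ((z - 1/b) * (1/a - z)) with hgdef
  have hder : ∀ x ∈ uIcc b a, HasDerivAt (fun w : ℝ => w⁻¹) (-((x:ℝ)^2)⁻¹) x := by
    intro x hx
    rw [huIcc] at hx
    exact hasDerivAt_inv (by nlinarith [hx.1] : x ≠ 0)
  have hcf' : ContinuousOn (fun x : ℝ => -((x:ℝ)^2)⁻¹) (uIcc b a) := by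
    rw [huIcc]
    apply ContinuousOn.neg
    apply ContinuousOn.inv₀ (continuous_pow 2).continuousOn
    intro x hx
    have : 0 < x := lt_of_lt_of_le ha hx.1
    positivity
  have himg : (fun w : ℝ => w⁻¹) '' (uIcc b a) ⊆ {z : ℝ | 0 < z} := by
    rw [huIcc]
    rintro z ⟨w, hw, rfl⟩
    have : 0 < w := lt_of_lt_of_le ha hw.1
    exact inv_pos.2 this
  have hgcont : ContinuousOn g ((fun w : ℝ => w⁻¹) '' (uIcc b a)) := by
    apply ContinuousOn.mono _ himg
    apply ContinuousOn.mul
    · intro z hz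
      exact (continuousAt_zpow₀ z (-(m:ℤ)-3) (Or.inl (ne_of_gt hz))).continuousWithinAt
    · exact (Real.continuous_sqrt.comp (by continuity)).continuousOn
  have key := intervalIntegral.integral_comp_smul_deriv' hder hcf' hgcont
  rw [show (b:ℝ)⁻¹ = 1/b from (one_div b).symm, show (a:ℝ)⁻¹ = 1/a from (one_div a).symm] at key
  rw [← key, intervalIntegral.integral_symm a b]
  have hpt : ∀ x ∈ uIcc a b, (-((x:ℝ)^2)⁻¹ • (g ∘ fun w : ℝ => w⁻¹) x)
      = -((Real.sqrt (a*b))⁻¹ * (x^m * Real.sqrt ((x-a)*(b-x)))) := by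
    intro x hx
    rw [Set.uIcc_of_le hab.le] at hx
    have hx0 : 0 < x := lt_of_lt_of_le ha hx.1
    have hzpow : (x⁻¹ : ℝ) ^ (-(m:ℤ)-3) = x ^ (m+3 : ℕ) := by
      rw [inv_zpow']
      rw [show -(-(m:ℤ)-3) = ((m+3 : ℕ) : ℤ) from by push_cast; ring]
      exact zpow_natCast x (m+3)
    have hprod : (x⁻¹ - 1/b) * (1/a - x⁻¹) = ((x-a)*(b-x)) * (a*b*x^2)⁻¹ := by
      field_simp
    have hsqrt : Real.sqrt ((x⁻¹ - 1/b) * (1/a - x⁻¹))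
        = Real.sqrt ((x-a)*(b-x)) * (Real.sqrt (a*b) * x)⁻¹ := by
      rw [hprod, Real.sqrt_mul (by nlinarith [hx.1, hx.2] : (0:ℝ) ≤ (x-a)*(b-x)),
        Real.sqrt_inv]
      congr 1
      rw [Real.sqrt_mul (by positivity : (0:ℝ) ≤ a*b), Real.sqrt_sq hx0.le]
    have hgx : (g ∘ fun w : ℝ => w⁻¹) x = x ^ (m+3 : ℕ) *
        (Real.sqrt ((x-a)*(b-x)) * (Real.sqrt (a*b) * x)⁻¹) := by
      simp only [Function.comp, hgdef]
      rw [hzpow, hsqrt]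
    rw [hgx, smul_eq_mul]
    have hsab : (0:ℝ) < Real.sqrt (a*b) := Real.sqrt_pos.2 (by positivity)
    have hxne : x ≠ 0 := hx0.ne'
    field_simp
    ring
  rw [intervalIntegral.integral_congr hpt, intervalIntegral.integral_neg, neg_neg,
    intervalIntegral.integral_const_mul]

/-- Branch-cut integral for the `q`-Catalan numbers: for `n ≥ 1`, `q > 0`,
`q ≠ 1`, with `z₋ = 1/(1+√q)²` and `z₊ = 1/(1−√q)²`,
`(|q−1|/(2π)) ∫_{z₋}^{z₊} z^(−n−2)·√((z−z₋)(z₊−z)) dz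
  = ∑_{j=1}^{n} (1/n)·C(n,j)·C(n,j−1)·q^j`. -/
theorem stmt11 (n : ℕ) (hn : 1 ≤ n) (q : ℝ) (hq : 0 < q) (hq1 : q ≠ 1) :
    (|q - 1| / (2 * Real.pi)) *
      ∫ z in (1 / (1 + Real.sqrt q) ^ 2)..(1 / (1 - Real.sqrt q) ^ 2),
        z ^ (-(n : ℤ) - 2) *
          Real.sqrt ((z - 1 / (1 + Real.sqrt q) ^ 2) * (1 / (1 - Real.sqrt q) ^ 2 - z))
      = ∑ j ∈ Finset.Icc 1 n,
          (1 / (n : ℝ)) * (Nat.choose n j : ℝ) * (Nat.choose n (j - 1) : ℝ) * q ^ j := by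
  obtain ⟨m, rfl⟩ : ∃ m, n = m + 1 := ⟨n - 1, by omega⟩
  set s := Real.sqrt q with hsdef
  have hs : 0 < s := Real.sqrt_pos.2 hq
  have hs2 : s ^ 2 = q := Real.sq_sqrt hq.le
  have hs1 : s ≠ 1 := by
    intro h
    apply hq1
    rw [← hs2, h]; norm_num
  have h1s : (1 : ℝ) - s ≠ 0 := sub_ne_zero.2 (Ne.symm hs1)
  have ha : 0 < (1 - s) ^ 2 := lt_of_le_of_ne (sq_nonneg _) (Ne.symm (pow_ne_zero 2 h1s))
  have hab : (1 - s) ^ 2 < (1 + s) ^ 2 := by nlinarith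
  have hexp : ∀ z : ℝ, z ^ (-((m + 1 : ℕ) : ℤ) - 2) = z ^ (-(m : ℤ) - 3) := by
    intro z
    congr 1
    push_cast; ring
  simp only [hexp]
  rw [subst_lemma ((1 - s) ^ 2) ((1 + s) ^ 2) ha hab m]
  have habq : (1 - s) ^ 2 * (1 + s) ^ 2 = (1 - q) ^ 2 := by
    have h : (1 - s) ^ 2 * (1 + s) ^ 2 = (1 - s ^ 2) ^ 2 := by ring
    rw [h, hs2]
  rw [habq, Real.sqrt_sq_eq_abs, abs_sub_comm 1 q]
  have hasb : (1 - s) ^ 2 + (1 + s) ^ 2 = 2 + 2 * q := by linear_combination 2 * hs2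
  -- the main induction
  have hmain : ∀ k : ℕ,
      (∫ w in ((1-s)^2)..((1+s)^2), w ^ k * Real.sqrt ((w - (1-s)^2) * ((1+s)^2 - w)))
        = 2 * Real.pi * Nar q (k + 1) ∧
      (∫ w in ((1-s)^2)..((1+s)^2), w ^ (k+1) * Real.sqrt ((w - (1-s)^2) * ((1+s)^2 - w)))
        = 2 * Real.pi * Nar q (k + 2) := by
    intro k
    induction k with
    | zero =>
      have e0 : ∀ w : ℝ, w ^ 0 * Real.sqrt ((w - (1-s)^2) * ((1+s)^2 - w))
          = Real.sqrt ((w - (1-s)^2) * ((1+s)^2 - w)) := fun w => by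
        rw [pow_zero, one_mul]
      have h00 : (∫ w in ((1-s)^2)..((1+s)^2),
          w ^ 0 * Real.sqrt ((w - (1-s)^2) * ((1+s)^2 - w))) = 2 * Real.pi * q := by
        rw [intervalIntegral.integral_congr (fun w _ => e0 w),
          J0_lemma ((1-s)^2) ((1+s)^2) hab.le]
        linear_combination 2 * Real.pi * hs2
      constructor
      · rw [h00, Nar_one]
      · have h1 := J_one ((1-s)^2) ((1+s)^2) hab.le
        rw [h00, hasb] at h1
        rw [Nar_two]
        linarith
    | succ k ih =>
      refine ⟨ih.2, ?_⟩
      have hrec := J_rec ((1-s)^2) ((1+s)^2) hab.le k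
      rw [hasb, habq, ih.1, ih.2] at hrec
      have h2 := Nar_rec q k
      have h4 : ((k : ℝ) + 4) ≠ 0 := by positivity
      rw [show k + 1 + 1 = k + 2 from rfl, show k + 1 + 2 = k + 3 from rfl]
      apply mul_left_cancel₀ h4
      rw [show k + 1 + 1 = k + 2 from rfl] at hrec
      linear_combination hrec - 2 * Real.pi * h2
  rw [(hmain m).1, ← Nar_eq_rhs q (m + 1) hn]
  have habs : |q - 1| ≠ 0 := by
    simp only [ne_eq, abs_eq_zero]
    exact sub_ne_zero.2 hq1
  have hpi : Real.pi ≠ 0 := Real.pi_ne_zero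
  field_simp
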